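/- arXiv:1902.05593 — 2 statements merged into one kernel-verified Lean document; each statement's English description precedes it below -/
import Mathlib

section
/- Let X be the Petty space, i.e. ℝ³ with the norm ‖(x,y,z)‖ = √(x² + y²) + |z|. Then H_α(X) = H'_α(X) = 2³ = 8: the 8 points ±A, ±B, ±C, ±D with A = (−0.18, 0, 0.82), B = (0.82, 0, −0.18), C = (0.32, 0.6, 0.32), D = (0.32, −0.6, 0.32) lie on the unit sphere of X and form a bounded and separated antipodal set with some constant d > 1, and 8 is the largest possible cardinality of such a set. -/
open MeasureTheory Module
open scoped ENNReal Pointwise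

/-- Abstract antipodality pair property (no topology needed). -/
def APair' {V : Type*} [AddCommGroup V] [Module ℝ V] (S : Set V) : Prop :=
  ∀ x ∈ S, ∀ y ∈ S, x ≠ y → ∃ f : V →ₗ[ℝ] ℝ, f y < f x ∧ ∀ z ∈ S, f y ≤ f z ∧ f z ≤ f x

lemma APair'.image_equiv {V W : Type*} [AddCommGroup V] [Module ℝ V]
    [AddCommGroup W] [Module ℝ W] (e : V ≃ₗ[ℝ] W) {S : Set V} (h : APair' S) :
    APair' (e '' S) := by
  rintro _ ⟨x, hx, rfl⟩ _ ⟨y, hy, rfl⟩ hxy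
  obtain ⟨f, h1, h2⟩ := h x hx y hy (fun hc => hxy (by rw [hc]))
  refine ⟨f.comp e.symm.toLinearMap, ?_, ?_⟩
  · simpa using h1
  · rintro _ ⟨z, hz, rfl⟩
    simpa using h2 z hz

lemma APair'.translate {V : Type*} [AddCommGroup V] [Module ℝ V] (t : V) {S : Set V}
    (h : APair' S) : APair' ((fun v => v + t) '' S) := by
  rintro _ ⟨x, hx, rfl⟩ _ ⟨y, hy, rfl⟩ hxy
  obtain ⟨f, h1, h2⟩ := h x hx y hy (fun hc => hxy (by rw [hc]))
  refine ⟨f, ?_, ?_⟩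
  · simp only [map_add]; linarith
  · rintro _ ⟨z, hz, rfl⟩
    have := h2 z hz
    simp only [map_add]
    constructor <;> linarith [this.1, this.2]

/-- Core Danzer–Grünbaum volume argument, full-dimensional case. -/
lemma DGcore (n : ℕ) (S : Finset (EuclideanSpace ℝ (Fin n)))
    (hsp : affineSpan ℝ (S : Set (EuclideanSpace ℝ (Fin n))) = ⊤)
    (hap : APair' (S : Set (EuclideanSpace ℝ (Fin n)))) : S.card ≤ 2 ^ n := by
  set μ : Measure (EuclideanSpace ℝ (Fin n)) := volume with hμ
  set K : Set (EuclideanSpace ℝ (Fin n)) := convexHull ℝ (S : Set (EuclideanSpace ℝ (Fin n)))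
    with hK
  have hKcpt : IsCompact K := S.finite_toSet.isCompact_convexHull ℝ
  have hconv : Convex ℝ K := convex_convexHull ℝ _
  have hSK : (S : Set (EuclideanSpace ℝ (Fin n))) ⊆ K := subset_convexHull ℝ _
  have hint : (interior K).Nonempty := by
    rw [hconv.interior_nonempty_iff_affineSpan_eq_top, hK, affineSpan_convexHull]
    exact hsp
  have hKpos : 0 < μ K :=
    lt_of_lt_of_le (isOpen_interior.measure_pos μ hint) (measure_mono interior_subset)
  have hKfin : μ K < ⊤ := hKcpt.measure_lt_top
  set T : EuclideanSpace ℝ (Fin n) → Set (EuclideanSpace ℝ (Fin n)) :=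
    fun x => (AffineMap.homothety x (1/2 : ℝ)) '' K with hT
  have hTmem : ∀ x, ∀ w ∈ T x, ∃ k ∈ K, w = (1/2 : ℝ) • x + (1/2 : ℝ) • k := by
    rintro x _ ⟨k, hk, rfl⟩
    refine ⟨k, hk, ?_⟩
    rw [AffineMap.homothety_apply]
    simp only [vsub_eq_sub, vadd_eq_add, smul_sub]
    module
  have hTK : ∀ x ∈ S, T x ⊆ K := by
    intro x hx w hw
    obtain ⟨k, hk, rfl⟩ := hTmem x w hw
    exact hconv (hSK hx) hk (by norm_num) (by norm_num) (by norm_num)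
  have hfK : ∀ (f : EuclideanSpace ℝ (Fin n) →ₗ[ℝ] ℝ) (a b : ℝ),
      (∀ z ∈ S, a ≤ f z ∧ f z ≤ b) → ∀ k ∈ K, a ≤ f k ∧ f k ≤ b := by
    intro f a b hz k hk
    have hsub : (S : Set (EuclideanSpace ℝ (Fin n))) ⊆ {w | a ≤ f w} ∩ {w | f w ≤ b} :=
      fun z hzS => ⟨(hz z hzS).1, (hz z hzS).2⟩
    have hcv : Convex ℝ ({w | a ≤ f w} ∩ {w | f w ≤ b}) :=
      (convex_halfSpace_ge f.isLinear a).inter (convex_halfSpace_le f.isLinear b)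
    have := convexHull_min hsub hcv hk
    exact ⟨this.1, this.2⟩
  have hdisj : (S : Set (EuclideanSpace ℝ (Fin n))).Pairwise (Function.onFun (AEDisjoint μ) T) := by
    intro x hx y hy hxy
    obtain ⟨f, h1, h2⟩ := hap x hx y hy hxy
    set c : ℝ := (f x + f y) / 2 with hc
    have hsubset : T x ∩ T y ⊆ {w | f w = c} := by
      rintro w ⟨hwx, hwy⟩
      obtain ⟨k, hk, rfl⟩ := hTmem x _ hwx
      obtain ⟨k', hk', hw'⟩ := hTmem y _ hwy
      have hfk := hfK f (f y) (f x) (fun z hz => h2 z hz) k hk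
      have hfk' := hfK f (f y) (f x) (fun z hz => h2 z hz) k' hk'
      have e1 : f ((1/2 : ℝ) • x + (1/2 : ℝ) • k) = (f x + f k)/2 := by
        rw [map_add, f.map_smul, f.map_smul]; simp [smul_eq_mul]; ring
      have e2 : f ((1/2 : ℝ) • x + (1/2 : ℝ) • k) = (f y + f k')/2 := by
        rw [hw', map_add, f.map_smul, f.map_smul]; simp [smul_eq_mul]; ring
      show f _ = c
      rw [e1]
      have h3 : (f x + f k)/2 = (f y + f k')/2 := by rw [← e1, ← e2]
      linarith [hfk.1, hfk'.2]
    have hf0 : f (x - y) ≠ 0 := by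
      rw [map_sub]; intro hcon; linarith
    have hft : f ((c / f (x - y)) • (x - y)) = c := by
      rw [f.map_smul, smul_eq_mul, div_mul_cancel₀ _ hf0]
    have hker : {w : EuclideanSpace ℝ (Fin n) | f w = c}
        = ((c / f (x - y)) • (x - y)) +ᵥ ((LinearMap.ker f : Submodule ℝ _) :
            Set (EuclideanSpace ℝ (Fin n))) := by
      ext w
      simp only [Set.mem_setOf_eq, Set.mem_vadd_set]
      constructor
      · intro hw
        refine ⟨w - (c / f (x - y)) • (x - y), ?_, by simp⟩
        have hz : f (w - (c / f (x - y)) • (x - y)) = 0 := by rw [map_sub, hft, hw, sub_self]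
        exact LinearMap.mem_ker.2 hz
      · rintro ⟨u, hu, rfl⟩
        simp only [SetLike.mem_coe, LinearMap.mem_ker] at hu
        show f _ = c
        rw [vadd_eq_add, map_add, hu, hft, add_zero]
    have hker0 : μ {w : EuclideanSpace ℝ (Fin n) | f w = c} = 0 := by
      rw [hker, measure_vadd]
      refine Measure.addHaar_submodule μ _ ?_
      intro hcon
      have hmem : x - y ∈ LinearMap.ker f := hcon ▸ Submodule.mem_top
      exact hf0 hmem
    exact measure_mono_null hsubset hker0
  have hmeas : ∀ x ∈ S, NullMeasurableSet (T x) μ := by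
    intro x _
    exact ((hKcpt.image (AffineMap.homothety_continuous x (1/2 : ℝ))).isClosed.measurableSet).nullMeasurableSet
  have hunion : μ (⋃ x ∈ S, T x) = ∑ x ∈ S, μ (T x) := measure_biUnion_finset₀ hdisj hmeas
  have hTμ : ∀ x : EuclideanSpace ℝ (Fin n), μ (T x) = ENNReal.ofReal ((1/2 : ℝ) ^ n) * μ K := by
    intro x
    rw [hT]
    simp only
    rw [Measure.addHaar_image_homothety]
    congr 2
    rw [abs_of_nonneg (by positivity)]
    congr 1
    simp [finrank_euclideanSpace_fin]
  have hle : (S.card : ℝ≥0∞) * (ENNReal.ofReal ((1/2 : ℝ) ^ n) * μ K) ≤ μ K := by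
    have e1 : ∑ x ∈ S, μ (T x) = (S.card : ℝ≥0∞) * (ENNReal.ofReal ((1/2 : ℝ) ^ n) * μ K) := by
      rw [Finset.sum_congr rfl (fun x _ => hTμ x), Finset.sum_const, nsmul_eq_mul]
    rw [← e1, ← hunion]
    exact measure_mono (Set.iUnion₂_subset hTK)
  have hKne : μ K ≠ ⊤ := hKfin.ne
  have hr : ((S.card : ℝ≥0∞) * (ENNReal.ofReal ((1/2 : ℝ) ^ n) * μ K)).toReal ≤ (μ K).toReal :=
    ENNReal.toReal_mono hKne hle
  have ha : (0 : ℝ) < (μ K).toReal := ENNReal.toReal_pos hKpos.ne' hKne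
  rw [ENNReal.toReal_mul, ENNReal.toReal_mul,
    ENNReal.toReal_ofReal (by positivity)] at hr
  have hcast : ((S.card : ℝ≥0∞)).toReal = (S.card : ℝ) := by simp
  rw [hcast] at hr
  have hcard : (S.card : ℝ) * ((1/2 : ℝ) ^ n) ≤ 1 := by nlinarith
  have hfin : (S.card : ℝ) ≤ 2 ^ n := by
    have h1 := mul_le_mul_of_nonneg_right hcard (le_of_lt (by positivity : (0:ℝ) < 2 ^ n))
    rw [one_mul] at h1
    calc (S.card : ℝ) = (S.card : ℝ) * ((1/2:ℝ)^n * 2^n) := by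
            rw [← mul_pow]; norm_num
      _ = (S.card : ℝ) * (1/2:ℝ)^n * 2^n := by ring
      _ ≤ 2 ^ n := h1
  exact_mod_cast hfin

open scoped Classical in
lemma APair'.subtype {V : Type*} [AddCommGroup V] [Module ℝ V] (W : Submodule ℝ V)
    (S : Finset V) (hSW : (S : Set V) ⊆ (W : Set V)) (h : APair' (S : Set V)) :
    APair' ((S.subtype (· ∈ W) : Finset W) : Set W) := by
  intro x hx y hy hxy
  rw [Finset.mem_coe, Finset.mem_subtype] at hx hy
  obtain ⟨f, h1, h2⟩ := h x hx y hy (fun hc => hxy (Subtype.ext hc))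
  refine ⟨f.comp W.subtype, h1, ?_⟩
  intro z hz
  rw [Finset.mem_coe, Finset.mem_subtype] at hz
  exact h2 z hz

lemma DGaux : ∀ (n : ℕ) (S : Finset (EuclideanSpace ℝ (Fin n))),
    APair' (S : Set (EuclideanSpace ℝ (Fin n))) → S.card ≤ 2 ^ n := by
  intro n
  induction n using Nat.strong_induction_on with
  | _ n IH =>
    intro S hap
    rcases S.eq_empty_or_nonempty with h | ⟨x₀, hx₀⟩
    · simp [h]
    · classical
      set T : Finset (EuclideanSpace ℝ (Fin n)) := S.image (fun v => v + (-x₀)) with hTdef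
      have hinj : Function.Injective (fun v : EuclideanSpace ℝ (Fin n) => v + (-x₀)) :=
        fun a b hab => by simpa using hab
      have hcardT : T.card = S.card := Finset.card_image_of_injective _ hinj
      have hapT : APair' (T : Set (EuclideanSpace ℝ (Fin n))) := by
        rw [hTdef, Finset.coe_image]
        exact hap.translate _
      have h0T : (0 : EuclideanSpace ℝ (Fin n)) ∈ T := by
        rw [hTdef, Finset.mem_image]
        exact ⟨x₀, hx₀, by simp⟩
      rw [← hcardT]
      by_cases hw : Submodule.span ℝ (T : Set (EuclideanSpace ℝ (Fin n))) = ⊤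
      · -- full dimensional: volume argument
        apply DGcore n T _ hapT
        -- affineSpan = ⊤
        have hvs : Submodule.span ℝ (T : Set (EuclideanSpace ℝ (Fin n)))
            ≤ vectorSpan ℝ (T : Set (EuclideanSpace ℝ (Fin n))) := by
          apply Submodule.span_le.2
          intro v hv
          have : v - 0 ∈ (T : Set (EuclideanSpace ℝ (Fin n)))
              -ᵥ (T : Set (EuclideanSpace ℝ (Fin n))) :=
            Set.sub_mem_sub hv h0T
          simpa [vectorSpan_def] using Submodule.subset_span this
        have hdir : vectorSpan ℝ (T : Set (EuclideanSpace ℝ (Fin n))) = ⊤ :=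
          top_unique (hw ▸ hvs)
        rw [eq_top_iff]
        intro p _
        have h0 : (0 : EuclideanSpace ℝ (Fin n)) ∈ affineSpan ℝ
            (T : Set (EuclideanSpace ℝ (Fin n))) := mem_affineSpan ℝ h0T
        have hp : p ∈ (affineSpan ℝ (T : Set (EuclideanSpace ℝ (Fin n)))).direction := by
          rw [direction_affineSpan, hdir]; trivial
        simpa using AffineSubspace.vadd_mem_of_mem_direction hp h0
      · -- degenerate: recurse into the span
        set W := Submodule.span ℝ (T : Set (EuclideanSpace ℝ (Fin n))) with hWdef
        have hTW : (T : Set (EuclideanSpace ℝ (Fin n))) ⊆ (W : Set _) :=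
          Submodule.subset_span
        have hk : Module.finrank ℝ W < n := by
          have := Submodule.finrank_lt hw
          simpa [finrank_euclideanSpace_fin] using this
        classical
        set S'' : Finset W := T.subtype (· ∈ W) with hS''
        have hcard'' : S''.card = T.card := by
          simp only [hS'', Finset.card_subtype]
          rw [Finset.filter_true_of_mem]
          intro x hx
          exact hTW hx
        have hap'' : APair' ((S'' : Finset W) : Set W) := APair'.subtype W T hTW hapT
        obtain ⟨e⟩ : Nonempty (W ≃ₗ[ℝ] EuclideanSpace ℝ (Fin (Module.finrank ℝ W))) := by
          apply FiniteDimensional.nonempty_linearEquiv_of_finrank_eq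
          rw [finrank_euclideanSpace_fin]
        set U : Finset (EuclideanSpace ℝ (Fin (Module.finrank ℝ W))) := S''.image e with hU
        have hcardU : U.card = S''.card := Finset.card_image_of_injective _ e.injective
        have hapU : APair' ((U : Finset (EuclideanSpace ℝ (Fin (Module.finrank ℝ W)))) : Set (EuclideanSpace ℝ (Fin (Module.finrank ℝ W)))) := by
          rw [hU, Finset.coe_image]
          exact hap''.image_equiv e
        have := IH (Module.finrank ℝ W) hk U hapU
        calc T.card = U.card := by rw [hcardU, hcard'']
          _ ≤ 2 ^ Module.finrank ℝ W := this
          _ ≤ 2 ^ n := Nat.pow_le_pow_right (by norm_num) hk.le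

section Aux

variable {X : Type*} [NormedAddCommGroup X] [NormedSpace ℝ X]

lemma mkfun (φ : X ≃ₗ[ℝ] (Fin 3 → ℝ))
    (hnorm : ∀ v : X, ‖v‖ = Real.sqrt ((φ v 0) ^ 2 + (φ v 1) ^ 2) + |φ v 2|)
    (a b c : ℝ) (hab : a ^ 2 + b ^ 2 ≤ 1) (hc : |c| ≤ 1) :
    ∃ f : X →L[ℝ] ℝ, ‖f‖ ≤ 1 ∧ ∀ v, f v = a * φ v 0 + b * φ v 1 + c * φ v 2 := by
  have : FiniteDimensional ℝ X := Module.Finite.equiv φ.symm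
  let g : (Fin 3 → ℝ) →ₗ[ℝ] ℝ :=
    a • LinearMap.proj 0 + b • LinearMap.proj 1 + c • LinearMap.proj 2
  let l : X →ₗ[ℝ] ℝ := g.comp φ.toLinearMap
  have hval : ∀ v, l v = a * φ v 0 + b * φ v 1 + c * φ v 2 := by
    intro v
    simp [l, g, LinearMap.add_apply, LinearMap.smul_apply, LinearMap.proj_apply, smul_eq_mul]
  refine ⟨LinearMap.toContinuousLinearMap l, ?_, fun v => hval v⟩
  apply ContinuousLinearMap.opNorm_le_bound _ zero_le_one
  intro v
  rw [one_mul, hnorm v]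
  have hlv : (LinearMap.toContinuousLinearMap l) v = a * φ v 0 + b * φ v 1 + c * φ v 2 := hval v
  rw [Real.norm_eq_abs, hlv]
  set x := φ v 0
  set y := φ v 1
  set z := φ v 2
  have hs : Real.sqrt (x ^ 2 + y ^ 2) ^ 2 = x ^ 2 + y ^ 2 := Real.sq_sqrt (by positivity)
  have hnn : 0 ≤ Real.sqrt (x ^ 2 + y ^ 2) := Real.sqrt_nonneg _
  have h1 : |a * x + b * y| ≤ Real.sqrt (x ^ 2 + y ^ 2) := by
    rw [← Real.sqrt_sq_eq_abs]
    apply Real.sqrt_le_sqrt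
    nlinarith [sq_nonneg (a * y - b * x),
      mul_nonneg (sub_nonneg.2 hab) (add_nonneg (sq_nonneg x) (sq_nonneg y))]
  have h2 : |c * z| ≤ |z| := by
    rw [abs_mul]
    have : 0 ≤ |z| := abs_nonneg z
    nlinarith [abs_nonneg c]
  calc |a * x + b * y + c * z| ≤ |a * x + b * y| + |c * z| := abs_add_le _ _
    _ ≤ Real.sqrt (x ^ 2 + y ^ 2) + |z| := add_le_add h1 h2

lemma cardBound (φ : X ≃ₗ[ℝ] (Fin 3 → ℝ)) (S : Finset X)
    (h : APair' (S : Set X)) : S.card ≤ 8 := by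
  classical
  let e : X ≃ₗ[ℝ] EuclideanSpace ℝ (Fin 3) :=
    φ.trans (EuclideanSpace.equiv (Fin 3) ℝ).symm.toLinearEquiv
  let U : Finset (EuclideanSpace ℝ (Fin 3)) := S.image e
  have hcardU : U.card = S.card := Finset.card_image_of_injective _ e.injective
  have hapU : APair' (U : Set (EuclideanSpace ℝ (Fin 3))) := by
    have : (U : Set (EuclideanSpace ℝ (Fin 3))) = e '' (S : Set X) := Finset.coe_image
    rw [this]
    exact h.image_equiv e
  have h8 := DGaux 3 U hapU
  rw [hcardU] at h8
  simpa using h8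
  
end Aux



open Metric

noncomputable section

/-- `S` is a bounded and separated antipodal subset of `X` with constant `d`. -/
def IsBSA {X : Type*} [NormedAddCommGroup X] [NormedSpace ℝ X] (S : Set X) (d : ℝ) : Prop :=
  S ⊆ closedBall (0 : X) 1 ∧
    ∀ x ∈ S, ∀ y ∈ S, x ≠ y → ∃ f : X →L[ℝ] ℝ, ‖f‖ ≤ 1 ∧
      d ≤ f x - f y ∧ ∀ z ∈ S, f y ≤ f z ∧ f z ≤ f x

/-- The antipodality condition (with gap `1`). -/
def AntipProp {X : Type*} [NormedAddCommGroup X] [NormedSpace ℝ X] (S : Set X) : Prop :=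
  ∀ x ∈ S, ∀ y ∈ S, x ≠ y → ∃ f : X →L[ℝ] ℝ, ‖f‖ ≤ 1 ∧
    1 ≤ f x - f y ∧ ∀ z ∈ S, f y ≤ f z ∧ f z ≤ f x

/-- The strict antipodality condition (with gap `> 1`). -/
def StrictAntipProp {X : Type*} [NormedAddCommGroup X] [NormedSpace ℝ X] (S : Set X) : Prop :=
  ∀ x ∈ S, ∀ y ∈ S, x ≠ y → ∃ f : X →L[ℝ] ℝ, ‖f‖ ≤ 1 ∧
    1 < f x - f y ∧ ∀ z ∈ S, f y ≤ f z ∧ f z ≤ f x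

/-- The antipodal Hadwiger number `H_α(X)`. -/
def Halpha (X : Type*) [NormedAddCommGroup X] [NormedSpace ℝ X] : ℕ :=
  sSup {k : ℕ | ∃ S : Finset X, S.card = k ∧ (S : Set X) ⊆ sphere (0 : X) 1 ∧
    AntipProp (S : Set X)}

/-- The strict antipodal Hadwiger number `H'_α(X)`. -/
def strictHalpha (X : Type*) [NormedAddCommGroup X] [NormedSpace ℝ X] : ℕ :=
  sSup {k : ℕ | ∃ S : Finset X, S.card = k ∧ (S : Set X) ⊆ sphere (0 : X) 1 ∧
    StrictAntipProp (S : Set X)}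

set_option maxHeartbeats 3000000 in
/-- Let `X` be the Petty space: `ℝ³` with the norm
`‖(x,y,z)‖ = √(x² + y²) + |z|` (formalized as a normed space `X` with a linear
equivalence `φ : X ≃ₗ[ℝ] (Fin 3 → ℝ)` carrying the norm to that formula). Then
`H_α(X) = H'_α(X) = 2³ = 8`: the `8` points `±A, ±B, ±C, ±D` with
`A = (−0.18, 0, 0.82)`, `B = (0.82, 0, −0.18)`, `C = (0.32, 0.6, 0.32)`,
`D = (0.32, −0.6, 0.32)` lie on the unit sphere of `X` and form a bounded and separated
antipodal set with some constant `d > 1`, and `8` is the largest possible cardinality of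
such a set. -/
theorem Halpha_petty_space (X : Type*) [NormedAddCommGroup X] [NormedSpace ℝ X]
    (φ : X ≃ₗ[ℝ] (Fin 3 → ℝ))
    (hnorm : ∀ v : X, ‖v‖ = Real.sqrt ((φ v 0) ^ 2 + (φ v 1) ^ 2) + |φ v 2|)
    (A B C D : X)
    (hA : φ A = ![-0.18, 0, 0.82]) (hB : φ B = ![0.82, 0, -0.18])
    (hC : φ C = ![0.32, 0.6, 0.32]) (hD : φ D = ![0.32, -0.6, 0.32])
    (S : Set X) (hS : S = {A, -A, B, -B, C, -C, D, -D}) :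
    S ⊆ sphere (0 : X) 1 ∧ (∃ d : ℝ, 1 < d ∧ IsBSA S d) ∧
    Halpha X = 8 ∧ strictHalpha X = 8 := by
  classical
  have hfd : FiniteDimensional ℝ X := Module.Finite.equiv φ.symm
  have pA0 : φ A (0 : Fin 3) = -0.18 := by rw [hA]; norm_num
  have pA1 : φ A (1 : Fin 3) = 0 := by rw [hA]; norm_num
  have pA2 : φ A (2 : Fin 3) = 0.82 := by rw [hA]; norm_num; rfl
  have pB0 : φ B (0 : Fin 3) = 0.82 := by rw [hB]; norm_num
  have pB1 : φ B (1 : Fin 3) = 0 := by rw [hB]; norm_num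
  have pB2 : φ B (2 : Fin 3) = -0.18 := by rw [hB]; norm_num; rfl
  have pC0 : φ C (0 : Fin 3) = 0.32 := by rw [hC]; norm_num
  have pC1 : φ C (1 : Fin 3) = 0.6 := by rw [hC]; norm_num
  have pC2 : φ C (2 : Fin 3) = 0.32 := by rw [hC]; norm_num; rfl
  have pD0 : φ D (0 : Fin 3) = 0.32 := by rw [hD]; norm_num
  have pD1 : φ D (1 : Fin 3) = -0.6 := by rw [hD]; norm_num
  have pD2 : φ D (2 : Fin 3) = 0.32 := by rw [hD]; norm_num; rfl
  have hnormA : ‖A‖ = 1 := by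
    rw [hnorm A, pA0, pA1, pA2]
    rw [show ((-0.18:ℝ)) ^ 2 + (0:ℝ) ^ 2 = (0.18:ℝ) ^ 2 by norm_num,
      Real.sqrt_sq (by norm_num : (0:ℝ) ≤ 0.18)]
    norm_num [abs_neg, abs_of_nonneg]
  have hnormB : ‖B‖ = 1 := by
    rw [hnorm B, pB0, pB1, pB2]
    rw [show ((0.82:ℝ)) ^ 2 + (0:ℝ) ^ 2 = (0.82:ℝ) ^ 2 by norm_num,
      Real.sqrt_sq (by norm_num : (0:ℝ) ≤ 0.82)]
    norm_num [abs_neg, abs_of_nonneg]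
  have hnormC : ‖C‖ = 1 := by
    rw [hnorm C, pC0, pC1, pC2]
    rw [show ((0.32:ℝ)) ^ 2 + (0.6:ℝ) ^ 2 = (0.68:ℝ) ^ 2 by norm_num,
      Real.sqrt_sq (by norm_num : (0:ℝ) ≤ 0.68)]
    norm_num [abs_neg, abs_of_nonneg]
  have hnormD : ‖D‖ = 1 := by
    rw [hnorm D, pD0, pD1, pD2]
    rw [show ((0.32:ℝ)) ^ 2 + (-0.6:ℝ) ^ 2 = (0.68:ℝ) ^ 2 by norm_num,
      Real.sqrt_sq (by norm_num : (0:ℝ) ≤ 0.68)]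
    norm_num [abs_neg, abs_of_nonneg]
  have hsphere : S ⊆ Metric.sphere (0 : X) 1 := by
    intro z hz
    rw [hS] at hz
    simp only [Set.mem_insert_iff, Set.mem_singleton_iff] at hz
    rw [mem_sphere_zero_iff_norm]
    rcases hz with rfl|rfl|rfl|rfl|rfl|rfl|rfl|rfl <;> first | assumption | (rw [norm_neg]; assumption)
  obtain ⟨f5, hnf5, hvf5⟩ := mkfun φ hnorm (1) (0) (1) (by norm_num) (by norm_num [abs_neg, abs_of_nonneg])
  have vf5A : f5 A = ((0.64:ℝ)) := by rw [hvf5, pA0, pA1, pA2]; norm_num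
  have vf5nA : f5 (-A) = -((0.64:ℝ)) := by rw [map_neg, vf5A]
  have vf5B : f5 B = ((0.64:ℝ)) := by rw [hvf5, pB0, pB1, pB2]; norm_num
  have vf5nB : f5 (-B) = -((0.64:ℝ)) := by rw [map_neg, vf5B]
  have vf5C : f5 C = ((0.64:ℝ)) := by rw [hvf5, pC0, pC1, pC2]; norm_num
  have vf5nC : f5 (-C) = -((0.64:ℝ)) := by rw [map_neg, vf5C]
  have vf5D : f5 D = ((0.64:ℝ)) := by rw [hvf5, pD0, pD1, pD2]; norm_num
  have vf5nD : f5 (-D) = -((0.64:ℝ)) := by rw [map_neg, vf5D]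
  have bf5A : |f5 A| ≤ ((0.64:ℝ)) := by rw [vf5A]; norm_num [abs_neg, abs_of_nonneg]
  have bf5B : |f5 B| ≤ ((0.64:ℝ)) := by rw [vf5B]; norm_num [abs_neg, abs_of_nonneg]
  have bf5C : |f5 C| ≤ ((0.64:ℝ)) := by rw [vf5C]; norm_num [abs_neg, abs_of_nonneg]
  have bf5D : |f5 D| ≤ ((0.64:ℝ)) := by rw [vf5D]; norm_num [abs_neg, abs_of_nonneg]
  obtain ⟨f6, hnf6, hvf6⟩ := mkfun φ hnorm (-1) (0) (-1) (by norm_num) (by norm_num [abs_neg, abs_of_nonneg])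
  have vf6A : f6 A = -((0.64:ℝ)) := by rw [hvf6, pA0, pA1, pA2]; norm_num
  have vf6nA : f6 (-A) = ((0.64:ℝ)) := by rw [map_neg, vf6A]; norm_num
  have vf6B : f6 B = -((0.64:ℝ)) := by rw [hvf6, pB0, pB1, pB2]; norm_num
  have vf6nB : f6 (-B) = ((0.64:ℝ)) := by rw [map_neg, vf6B]; norm_num
  have vf6C : f6 C = -((0.64:ℝ)) := by rw [hvf6, pC0, pC1, pC2]; norm_num
  have vf6nC : f6 (-C) = ((0.64:ℝ)) := by rw [map_neg, vf6C]; norm_num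
  have vf6D : f6 D = -((0.64:ℝ)) := by rw [hvf6, pD0, pD1, pD2]; norm_num
  have vf6nD : f6 (-D) = ((0.64:ℝ)) := by rw [map_neg, vf6D]; norm_num
  have bf6A : |f6 A| ≤ ((0.64:ℝ)) := by rw [vf6A]; norm_num [abs_neg, abs_of_nonneg]
  have bf6B : |f6 B| ≤ ((0.64:ℝ)) := by rw [vf6B]; norm_num [abs_neg, abs_of_nonneg]
  have bf6C : |f6 C| ≤ ((0.64:ℝ)) := by rw [vf6C]; norm_num [abs_neg, abs_of_nonneg]
  have bf6D : |f6 D| ≤ ((0.64:ℝ)) := by rw [vf6D]; norm_num [abs_neg, abs_of_nonneg]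
  obtain ⟨f7, hnf7, hvf7⟩ := mkfun φ hnorm (-0.51) (0.85) (0.51) (by norm_num) (by norm_num [abs_neg, abs_of_nonneg])
  have vf7A : f7 A = ((0.51:ℝ)) := by rw [hvf7, pA0, pA1, pA2]; norm_num
  have vf7nA : f7 (-A) = -((0.51:ℝ)) := by rw [map_neg, vf7A]
  have vf7B : f7 B = -((0.51:ℝ)) := by rw [hvf7, pB0, pB1, pB2]; norm_num
  have vf7nB : f7 (-B) = ((0.51:ℝ)) := by rw [map_neg, vf7B]; norm_num
  have vf7C : f7 C = ((0.51:ℝ)) := by rw [hvf7, pC0, pC1, pC2]; norm_num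
  have vf7nC : f7 (-C) = -((0.51:ℝ)) := by rw [map_neg, vf7C]
  have vf7D : f7 D = -((0.51:ℝ)) := by rw [hvf7, pD0, pD1, pD2]; norm_num
  have vf7nD : f7 (-D) = ((0.51:ℝ)) := by rw [map_neg, vf7D]; norm_num
  have bf7A : |f7 A| ≤ ((0.51:ℝ)) := by rw [vf7A]; norm_num [abs_neg, abs_of_nonneg]
  have bf7B : |f7 B| ≤ ((0.51:ℝ)) := by rw [vf7B]; norm_num [abs_neg, abs_of_nonneg]
  have bf7C : |f7 C| ≤ ((0.51:ℝ)) := by rw [vf7C]; norm_num [abs_neg, abs_of_nonneg]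
  have bf7D : |f7 D| ≤ ((0.51:ℝ)) := by rw [vf7D]; norm_num [abs_neg, abs_of_nonneg]
  obtain ⟨f8, hnf8, hvf8⟩ := mkfun φ hnorm (0.51) (-0.85) (-0.51) (by norm_num) (by norm_num [abs_neg, abs_of_nonneg])
  have vf8A : f8 A = -((0.51:ℝ)) := by rw [hvf8, pA0, pA1, pA2]; norm_num
  have vf8nA : f8 (-A) = ((0.51:ℝ)) := by rw [map_neg, vf8A]; norm_num
  have vf8B : f8 B = ((0.51:ℝ)) := by rw [hvf8, pB0, pB1, pB2]; norm_num
  have vf8nB : f8 (-B) = -((0.51:ℝ)) := by rw [map_neg, vf8B]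
  have vf8C : f8 C = -((0.51:ℝ)) := by rw [hvf8, pC0, pC1, pC2]; norm_num
  have vf8nC : f8 (-C) = ((0.51:ℝ)) := by rw [map_neg, vf8C]; norm_num
  have vf8D : f8 D = ((0.51:ℝ)) := by rw [hvf8, pD0, pD1, pD2]; norm_num
  have vf8nD : f8 (-D) = -((0.51:ℝ)) := by rw [map_neg, vf8D]
  have bf8A : |f8 A| ≤ ((0.51:ℝ)) := by rw [vf8A]; norm_num [abs_neg, abs_of_nonneg]
  have bf8B : |f8 B| ≤ ((0.51:ℝ)) := by rw [vf8B]; norm_num [abs_neg, abs_of_nonneg]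
  have bf8C : |f8 C| ≤ ((0.51:ℝ)) := by rw [vf8C]; norm_num [abs_neg, abs_of_nonneg]
  have bf8D : |f8 D| ≤ ((0.51:ℝ)) := by rw [vf8D]; norm_num [abs_neg, abs_of_nonneg]
  obtain ⟨f9, hnf9, hvf9⟩ := mkfun φ hnorm (-0.51) (-0.85) (0.51) (by norm_num) (by norm_num [abs_neg, abs_of_nonneg])
  have vf9A : f9 A = ((0.51:ℝ)) := by rw [hvf9, pA0, pA1, pA2]; norm_num
  have vf9nA : f9 (-A) = -((0.51:ℝ)) := by rw [map_neg, vf9A]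
  have vf9B : f9 B = -((0.51:ℝ)) := by rw [hvf9, pB0, pB1, pB2]; norm_num
  have vf9nB : f9 (-B) = ((0.51:ℝ)) := by rw [map_neg, vf9B]; norm_num
  have vf9C : f9 C = -((0.51:ℝ)) := by rw [hvf9, pC0, pC1, pC2]; norm_num
  have vf9nC : f9 (-C) = ((0.51:ℝ)) := by rw [map_neg, vf9C]; norm_num
  have vf9D : f9 D = ((0.51:ℝ)) := by rw [hvf9, pD0, pD1, pD2]; norm_num
  have vf9nD : f9 (-D) = -((0.51:ℝ)) := by rw [map_neg, vf9D]
  have bf9A : |f9 A| ≤ ((0.51:ℝ)) := by rw [vf9A]; norm_num [abs_neg, abs_of_nonneg]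
  have bf9B : |f9 B| ≤ ((0.51:ℝ)) := by rw [vf9B]; norm_num [abs_neg, abs_of_nonneg]
  have bf9C : |f9 C| ≤ ((0.51:ℝ)) := by rw [vf9C]; norm_num [abs_neg, abs_of_nonneg]
  have bf9D : |f9 D| ≤ ((0.51:ℝ)) := by rw [vf9D]; norm_num [abs_neg, abs_of_nonneg]
  obtain ⟨f10, hnf10, hvf10⟩ := mkfun φ hnorm (0.51) (0.85) (-0.51) (by norm_num) (by norm_num [abs_neg, abs_of_nonneg])
  have vf10A : f10 A = -((0.51:ℝ)) := by rw [hvf10, pA0, pA1, pA2]; norm_num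
  have vf10nA : f10 (-A) = ((0.51:ℝ)) := by rw [map_neg, vf10A]; norm_num
  have vf10B : f10 B = ((0.51:ℝ)) := by rw [hvf10, pB0, pB1, pB2]; norm_num
  have vf10nB : f10 (-B) = -((0.51:ℝ)) := by rw [map_neg, vf10B]
  have vf10C : f10 C = ((0.51:ℝ)) := by rw [hvf10, pC0, pC1, pC2]; norm_num
  have vf10nC : f10 (-C) = -((0.51:ℝ)) := by rw [map_neg, vf10C]
  have vf10D : f10 D = -((0.51:ℝ)) := by rw [hvf10, pD0, pD1, pD2]; norm_num
  have vf10nD : f10 (-D) = ((0.51:ℝ)) := by rw [map_neg, vf10D]; norm_num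
  have bf10A : |f10 A| ≤ ((0.51:ℝ)) := by rw [vf10A]; norm_num [abs_neg, abs_of_nonneg]
  have bf10B : |f10 B| ≤ ((0.51:ℝ)) := by rw [vf10B]; norm_num [abs_neg, abs_of_nonneg]
  have bf10C : |f10 C| ≤ ((0.51:ℝ)) := by rw [vf10C]; norm_num [abs_neg, abs_of_nonneg]
  have bf10D : |f10 D| ≤ ((0.51:ℝ)) := by rw [vf10D]; norm_num [abs_neg, abs_of_nonneg]
  have W : ∀ (f : X →L[ℝ] ℝ), ‖f‖ ≤ 1 → ∀ (x y : X) (M : ℝ), f x = M → f y = -M →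
      (1.02:ℝ) ≤ M + M → |f A| ≤ M → |f B| ≤ M → |f C| ≤ M → |f D| ≤ M →
      ∃ g : X →L[ℝ] ℝ, ‖g‖ ≤ 1 ∧ (1.02:ℝ) ≤ g x - g y ∧ ∀ z ∈ S, g y ≤ g z ∧ g z ≤ g x := by
    intro f hf x y M hfx hfy hg bA bB bC bD
    obtain ⟨aA1, aA2⟩ := abs_le.mp bA
    obtain ⟨aB1, aB2⟩ := abs_le.mp bB
    obtain ⟨aC1, aC2⟩ := abs_le.mp bC
    obtain ⟨aD1, aD2⟩ := abs_le.mp bD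
    refine ⟨f, hf, by rw [hfx, hfy]; linarith, ?_⟩
    intro z hz
    rw [hS] at hz
    simp only [Set.mem_insert_iff, Set.mem_singleton_iff] at hz
    rw [hfx, hfy]
    rcases hz with rfl|rfl|rfl|rfl|rfl|rfl|rfl|rfl <;> (try rw [map_neg]) <;>
      exact ⟨by linarith, by linarith⟩
  have main : ∀ x ∈ S, ∀ y ∈ S, x ≠ y → ∃ g : X →L[ℝ] ℝ, ‖g‖ ≤ 1 ∧
      (1.02:ℝ) ≤ g x - g y ∧ ∀ z ∈ S, g y ≤ g z ∧ g z ≤ g x := by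
    intro x hx y hy hne
    rw [hS] at hx hy
    simp only [Set.mem_insert_iff, Set.mem_singleton_iff] at hx hy
    rcases hx with rfl|rfl|rfl|rfl|rfl|rfl|rfl|rfl <;>
      rcases hy with rfl|rfl|rfl|rfl|rfl|rfl|rfl|rfl <;>
      first
        | exact absurd rfl hne
        | exact W f5 hnf5 _ _ _ (by assumption) (by assumption) (by norm_num) bf5A bf5B bf5C bf5D
        | exact W f6 hnf6 _ _ _ (by assumption) (by assumption) (by norm_num) bf6A bf6B bf6C bf6D
        | exact W f7 hnf7 _ _ _ (by assumption) (by assumption) (by norm_num) bf7A bf7B bf7C bf7D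
        | exact W f8 hnf8 _ _ _ (by assumption) (by assumption) (by norm_num) bf8A bf8B bf8C bf8D
        | exact W f9 hnf9 _ _ _ (by assumption) (by assumption) (by norm_num) bf9A bf9B bf9C bf9D
        | exact W f10 hnf10 _ _ _ (by assumption) (by assumption) (by norm_num) bf10A bf10B bf10C bf10D
  have hneW : ∀ u v : X, (φ u 0 + 10 * φ u 1 + 100 * φ u 2 ≠ φ v 0 + 10 * φ v 1 + 100 * φ v 2) →
      u ≠ v := fun u v h hc => h (by rw [hc])
  have neAmA : (A : X) ≠ -A := hneW _ _ (by
    simp only [map_neg, Pi.neg_apply, pA0, pA1, pA2, pB0, pB1, pB2, pC0, pC1, pC2, pD0, pD1, pD2]; norm_num)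
  have neAB : (A : X) ≠ B := hneW _ _ (by
    simp only [map_neg, Pi.neg_apply, pA0, pA1, pA2, pB0, pB1, pB2, pC0, pC1, pC2, pD0, pD1, pD2]; norm_num)
  have neAmB : (A : X) ≠ -B := hneW _ _ (by
    simp only [map_neg, Pi.neg_apply, pA0, pA1, pA2, pB0, pB1, pB2, pC0, pC1, pC2, pD0, pD1, pD2]; norm_num)
  have neAC : (A : X) ≠ C := hneW _ _ (by
    simp only [map_neg, Pi.neg_apply, pA0, pA1, pA2, pB0, pB1, pB2, pC0, pC1, pC2, pD0, pD1, pD2]; norm_num)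
  have neAmC : (A : X) ≠ -C := hneW _ _ (by
    simp only [map_neg, Pi.neg_apply, pA0, pA1, pA2, pB0, pB1, pB2, pC0, pC1, pC2, pD0, pD1, pD2]; norm_num)
  have neAD : (A : X) ≠ D := hneW _ _ (by
    simp only [map_neg, Pi.neg_apply, pA0, pA1, pA2, pB0, pB1, pB2, pC0, pC1, pC2, pD0, pD1, pD2]; norm_num)
  have neAmD : (A : X) ≠ -D := hneW _ _ (by
    simp only [map_neg, Pi.neg_apply, pA0, pA1, pA2, pB0, pB1, pB2, pC0, pC1, pC2, pD0, pD1, pD2]; norm_num)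
  have nemAB : (-A : X) ≠ B := hneW _ _ (by
    simp only [map_neg, Pi.neg_apply, pA0, pA1, pA2, pB0, pB1, pB2, pC0, pC1, pC2, pD0, pD1, pD2]; norm_num)
  have nemAmB : (-A : X) ≠ -B := hneW _ _ (by
    simp only [map_neg, Pi.neg_apply, pA0, pA1, pA2, pB0, pB1, pB2, pC0, pC1, pC2, pD0, pD1, pD2]; norm_num)
  have nemAC : (-A : X) ≠ C := hneW _ _ (by
    simp only [map_neg, Pi.neg_apply, pA0, pA1, pA2, pB0, pB1, pB2, pC0, pC1, pC2, pD0, pD1, pD2]; norm_num)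
  have nemAmC : (-A : X) ≠ -C := hneW _ _ (by
    simp only [map_neg, Pi.neg_apply, pA0, pA1, pA2, pB0, pB1, pB2, pC0, pC1, pC2, pD0, pD1, pD2]; norm_num)
  have nemAD : (-A : X) ≠ D := hneW _ _ (by
    simp only [map_neg, Pi.neg_apply, pA0, pA1, pA2, pB0, pB1, pB2, pC0, pC1, pC2, pD0, pD1, pD2]; norm_num)
  have nemAmD : (-A : X) ≠ -D := hneW _ _ (by
    simp only [map_neg, Pi.neg_apply, pA0, pA1, pA2, pB0, pB1, pB2, pC0, pC1, pC2, pD0, pD1, pD2]; norm_num)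
  have neBmB : (B : X) ≠ -B := hneW _ _ (by
    simp only [map_neg, Pi.neg_apply, pA0, pA1, pA2, pB0, pB1, pB2, pC0, pC1, pC2, pD0, pD1, pD2]; norm_num)
  have neBC : (B : X) ≠ C := hneW _ _ (by
    simp only [map_neg, Pi.neg_apply, pA0, pA1, pA2, pB0, pB1, pB2, pC0, pC1, pC2, pD0, pD1, pD2]; norm_num)
  have neBmC : (B : X) ≠ -C := hneW _ _ (by
    simp only [map_neg, Pi.neg_apply, pA0, pA1, pA2, pB0, pB1, pB2, pC0, pC1, pC2, pD0, pD1, pD2]; norm_num)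
  have neBD : (B : X) ≠ D := hneW _ _ (by
    simp only [map_neg, Pi.neg_apply, pA0, pA1, pA2, pB0, pB1, pB2, pC0, pC1, pC2, pD0, pD1, pD2]; norm_num)
  have neBmD : (B : X) ≠ -D := hneW _ _ (by
    simp only [map_neg, Pi.neg_apply, pA0, pA1, pA2, pB0, pB1, pB2, pC0, pC1, pC2, pD0, pD1, pD2]; norm_num)
  have nemBC : (-B : X) ≠ C := hneW _ _ (by
    simp only [map_neg, Pi.neg_apply, pA0, pA1, pA2, pB0, pB1, pB2, pC0, pC1, pC2, pD0, pD1, pD2]; norm_num)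
  have nemBmC : (-B : X) ≠ -C := hneW _ _ (by
    simp only [map_neg, Pi.neg_apply, pA0, pA1, pA2, pB0, pB1, pB2, pC0, pC1, pC2, pD0, pD1, pD2]; norm_num)
  have nemBD : (-B : X) ≠ D := hneW _ _ (by
    simp only [map_neg, Pi.neg_apply, pA0, pA1, pA2, pB0, pB1, pB2, pC0, pC1, pC2, pD0, pD1, pD2]; norm_num)
  have nemBmD : (-B : X) ≠ -D := hneW _ _ (by
    simp only [map_neg, Pi.neg_apply, pA0, pA1, pA2, pB0, pB1, pB2, pC0, pC1, pC2, pD0, pD1, pD2]; norm_num)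
  have neCmC : (C : X) ≠ -C := hneW _ _ (by
    simp only [map_neg, Pi.neg_apply, pA0, pA1, pA2, pB0, pB1, pB2, pC0, pC1, pC2, pD0, pD1, pD2]; norm_num)
  have neCD : (C : X) ≠ D := hneW _ _ (by
    simp only [map_neg, Pi.neg_apply, pA0, pA1, pA2, pB0, pB1, pB2, pC0, pC1, pC2, pD0, pD1, pD2]; norm_num)
  have neCmD : (C : X) ≠ -D := hneW _ _ (by
    simp only [map_neg, Pi.neg_apply, pA0, pA1, pA2, pB0, pB1, pB2, pC0, pC1, pC2, pD0, pD1, pD2]; norm_num)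
  have nemCD : (-C : X) ≠ D := hneW _ _ (by
    simp only [map_neg, Pi.neg_apply, pA0, pA1, pA2, pB0, pB1, pB2, pC0, pC1, pC2, pD0, pD1, pD2]; norm_num)
  have nemCmD : (-C : X) ≠ -D := hneW _ _ (by
    simp only [map_neg, Pi.neg_apply, pA0, pA1, pA2, pB0, pB1, pB2, pC0, pC1, pC2, pD0, pD1, pD2]; norm_num)
  have neDmD : (D : X) ≠ -D := hneW _ _ (by
    simp only [map_neg, Pi.neg_apply, pA0, pA1, pA2, pB0, pB1, pB2, pC0, pC1, pC2, pD0, pD1, pD2]; norm_num)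
  set S₀ : Finset X := {A, -A, B, -B, C, -C, D, -D} with hS₀
  have hcoe : (S₀ : Set X) = S := by
    rw [hS, hS₀]
    ext z
    simp [Set.mem_insert_iff, Set.mem_singleton_iff, or_assoc]
  have hcard : S₀.card = 8 := by
    rw [hS₀]
    rw [Finset.card_insert_of_notMem (by simp [neAmA, neAB, neAmB, neAC, neAmC, neAD, neAmD, nemAB, nemAmB, nemAC, nemAmC, nemAD, nemAmD, neBmB, neBC, neBmC, neBD, neBmD, nemBC, nemBmC, nemBD, nemBmD, neCmC, neCD, neCmD, nemCD, nemCmD, neDmD])]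
    rw [Finset.card_insert_of_notMem (by simp [neAmA, neAB, neAmB, neAC, neAmC, neAD, neAmD, nemAB, nemAmB, nemAC, nemAmC, nemAD, nemAmD, neBmB, neBC, neBmC, neBD, neBmD, nemBC, nemBmC, nemBD, nemBmD, neCmC, neCD, neCmD, nemCD, nemCmD, neDmD])]
    rw [Finset.card_insert_of_notMem (by simp [neAmA, neAB, neAmB, neAC, neAmC, neAD, neAmD, nemAB, nemAmB, nemAC, nemAmC, nemAD, nemAmD, neBmB, neBC, neBmC, neBD, neBmD, nemBC, nemBmC, nemBD, nemBmD, neCmC, neCD, neCmD, nemCD, nemCmD, neDmD])]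
    rw [Finset.card_insert_of_notMem (by simp [neAmA, neAB, neAmB, neAC, neAmC, neAD, neAmD, nemAB, nemAmB, nemAC, nemAmC, nemAD, nemAmD, neBmB, neBC, neBmC, neBD, neBmD, nemBC, nemBmC, nemBD, nemBmD, neCmC, neCD, neCmD, nemCD, nemCmD, neDmD])]
    rw [Finset.card_insert_of_notMem (by simp [neAmA, neAB, neAmB, neAC, neAmC, neAD, neAmD, nemAB, nemAmB, nemAC, nemAmC, nemAD, nemAmD, neBmB, neBC, neBmC, neBD, neBmD, nemBC, nemBmC, nemBD, nemBmD, neCmC, neCD, neCmD, nemCD, nemCmD, neDmD])]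
    rw [Finset.card_insert_of_notMem (by simp [neAmA, neAB, neAmB, neAC, neAmC, neAD, neAmD, nemAB, nemAmB, nemAC, nemAmC, nemAD, nemAmD, neBmB, neBC, neBmC, neBD, neBmD, nemBC, nemBmC, nemBD, nemBmD, neCmC, neCD, neCmD, nemCD, nemCmD, neDmD])]
    rw [Finset.card_insert_of_notMem (by simp [neAmA, neAB, neAmB, neAC, neAmC, neAD, neAmD, nemAB, nemAmB, nemAC, nemAmC, nemAD, nemAmD, neBmB, neBC, neBmC, neBD, neBmD, nemBC, nemBmC, nemBD, nemBmD, neCmC, neCD, neCmD, nemCD, nemCmD, neDmD])]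
    rw [Finset.card_singleton]
  have toAP : ∀ (S' : Finset X), (∀ x ∈ (S' : Set X), ∀ y ∈ (S' : Set X), x ≠ y →
      ∃ f : X →L[ℝ] ℝ, ‖f‖ ≤ 1 ∧ 1 ≤ f x - f y ∧ ∀ z ∈ (S' : Set X), f y ≤ f z ∧ f z ≤ f x) →
      APair' (S' : Set X) := by
    intro S' hS' x hx y hy hne
    obtain ⟨f, _, hgap, hbd⟩ := hS' x hx y hy hne
    refine ⟨(f : X →ₗ[ℝ] ℝ), ?_, ?_⟩
    · show f y < f x
      linarith
    · intro z hz
      exact hbd z hz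
  have hAntip : AntipProp S := by
    intro x hx y hy hne
    obtain ⟨g, h1, h2, h3⟩ := main x hx y hy hne
    exact ⟨g, h1, by linarith, h3⟩
  have hStrict : StrictAntipProp S := by
    intro x hx y hy hne
    obtain ⟨g, h1, h2, h3⟩ := main x hx y hy hne
    exact ⟨g, h1, by linarith, h3⟩
  have hub1 : ∀ k ∈ {k : ℕ | ∃ S' : Finset X, S'.card = k ∧ (S' : Set X) ⊆ Metric.sphere (0 : X) 1 ∧
      AntipProp (S' : Set X)}, k ≤ 8 := by
    rintro k ⟨S', rfl, _, hant⟩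
    exact cardBound φ S' (toAP S' hant)
  have hub2 : ∀ k ∈ {k : ℕ | ∃ S' : Finset X, S'.card = k ∧ (S' : Set X) ⊆ Metric.sphere (0 : X) 1 ∧
      StrictAntipProp (S' : Set X)}, k ≤ 8 := by
    rintro k ⟨S', rfl, _, hant⟩
    refine cardBound φ S' (toAP S' ?_)
    intro x hx y hy hne
    obtain ⟨f, h1, h2, h3⟩ := hant x hx y hy hne
    exact ⟨f, h1, h2.le, h3⟩
  have hmem1 : (8 : ℕ) ∈ {k : ℕ | ∃ S' : Finset X, S'.card = k ∧ (S' : Set X) ⊆ Metric.sphere (0 : X) 1 ∧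
      AntipProp (S' : Set X)} := ⟨S₀, hcard, by rw [hcoe]; exact hsphere, by rw [hcoe]; exact hAntip⟩
  have hmem2 : (8 : ℕ) ∈ {k : ℕ | ∃ S' : Finset X, S'.card = k ∧ (S' : Set X) ⊆ Metric.sphere (0 : X) 1 ∧
      StrictAntipProp (S' : Set X)} := ⟨S₀, hcard, by rw [hcoe]; exact hsphere, by rw [hcoe]; exact hStrict⟩
  refine ⟨hsphere, ⟨1.02, by norm_num, ?_, ?_⟩, ?_, ?_⟩
  · intro z hz
    have := hsphere hz
    rw [mem_sphere_zero_iff_norm] at this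
    rw [Metric.mem_closedBall, dist_zero_right, this]
  · exact main
  · unfold Halpha
    exact le_antisymm (csSup_le ⟨8, hmem1⟩ hub1) (le_csSup ⟨8, hub1⟩ hmem1)
  · unfold strictHalpha
    exact le_antisymm (csSup_le ⟨8, hmem2⟩ hub2) (le_csSup ⟨8, hub2⟩ hmem2)

end
end

section
/- Every two-dimensional real normed space (Minkowski plane) X admits an Auerbach basis {(e_i, e_i*) : i = 1, 2} such that ‖e_1 − e_2‖ > 1 and ‖e_1 + e_2‖ > 1. -/
noncomputable section

theorem aux_key {X : Type*} [NormedAddCommGroup X] [NormedSpace ℝ X]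
    (ω : X →ₗ[ℝ] X →ₗ[ℝ] ℝ) (M : ℝ) (hM : 0 < M)
    (hsym : ∀ x y : X, ω y x = -ω x y)
    (hKI : ∀ z w : X, |ω z w| ≤ M * ‖z‖ * ‖w‖)
    (u v : X) (hu : ‖u‖ = 1) (hv : ‖v‖ = 1) (huv : ω u v = M)
    (hmax : ∀ a b : X, ‖a‖ = 1 → ‖b‖ = 1 → ω a b = M →
      ‖a + b‖ * ‖a - b‖ ≤ ‖u + v‖ * ‖u - v‖) :
    1 < ‖u - v‖ := by
  have hself : ∀ x : X, ω x x = 0 := fun x => by have := hsym x x; linarith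
  have hvu : ω v u = -M := by rw [hsym]; rw [huv]
  have e1 : ω (u - v) v = M := by
    simp [map_sub, LinearMap.sub_apply, huv, hself]
  have h1 : (1:ℝ) ≤ ‖u - v‖ := by
    have := hKI (u - v) v
    rw [e1, hv, mul_one] at this
    have hle : M ≤ M * ‖u - v‖ := le_trans (le_abs_self M) this
    nlinarith
  rcases lt_or_eq_of_le h1 with h | h
  · exact h
  exfalso
  have heq : ‖u - v‖ = 1 := h.symm
  have e2 : ω (u + v) (u - v) = -(2 * M) := by
    simp only [map_add, map_sub, LinearMap.add_apply, LinearMap.sub_apply, huv, hvu, hself]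
    ring
  have h2 : ‖u + v‖ = 2 := by
    have hub : ‖u + v‖ ≤ 2 := by
      calc ‖u + v‖ ≤ ‖u‖ + ‖v‖ := norm_add_le u v
      _ = 2 := by rw [hu, hv]; norm_num
    have := hKI (u + v) (u - v)
    rw [e2, heq, mul_one] at this
    have habs : |-(2 * M)| = 2 * M := by
      rw [abs_neg, abs_of_pos]; positivity
    rw [habs] at this
    nlinarith
  set w : X := u - v with hw_def
  set m : X := (2:ℝ)⁻¹ • (u + v) with hm_def
  have hwn : ‖w‖ = 1 := heq
  have hmn : ‖m‖ = 1 := by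
    rw [hm_def, norm_smul, h2]
    norm_num
  have hwm : ω w m = M := by
    rw [hw_def, hm_def, map_smul]
    simp only [map_sub, map_add, LinearMap.sub_apply, LinearMap.add_apply,
      LinearMap.smul_apply, huv, hvu, hself, smul_eq_mul]
    ring
  have hb := hmax w m hwn hmn hwm
  rw [h2, heq, mul_one] at hb
  have id1 : w + m = (2:ℝ)⁻¹ • ((3:ℝ) • u - v) := by
    rw [hw_def, hm_def]; module
  have id2 : w - m = (2:ℝ)⁻¹ • (u - (3:ℝ) • v) := by
    rw [hw_def, hm_def]; module
  have l1 : (3:ℝ) ≤ ‖(3:ℝ) • u - v‖ := by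
    have e3 : ω ((3:ℝ) • u - v) v = 3 * M := by
      simp only [map_sub, map_smul, LinearMap.sub_apply, LinearMap.smul_apply,
        huv, hself, smul_eq_mul]
      ring
    have := hKI ((3:ℝ) • u - v) v
    rw [e3, hv, mul_one] at this
    have hle : 3 * M ≤ M * ‖(3:ℝ) • u - v‖ := le_trans (le_abs_self _) this
    nlinarith
  have l2 : (3:ℝ) ≤ ‖u - (3:ℝ) • v‖ := by
    have e4 : ω u (u - (3:ℝ) • v) = -(3 * M) := by
      simp only [map_sub, map_smul, huv, hself, smul_eq_mul]
      ring
    have := hKI u (u - (3:ℝ) • v)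
    rw [e4, hu] at this
    have habs : |-(3 * M)| = 3 * M := by rw [abs_neg, abs_of_pos]; positivity
    rw [habs, mul_one] at this
    nlinarith
  have n1 : (3:ℝ)/2 ≤ ‖w + m‖ := by
    rw [id1, norm_smul]
    simp only [norm_inv, Real.norm_ofNat]
    linarith [l1]
  have n2 : (3:ℝ)/2 ≤ ‖w - m‖ := by
    rw [id2, norm_smul]
    simp only [norm_inv, Real.norm_ofNat]
    linarith [l2]
  nlinarith [n1, n2, hb]

set_option maxHeartbeats 1000000 in
/-- Every Minkowski plane (two-dimensional real normed space) `X`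
admits an Auerbach basis `{(b i, f i) : i = 1, 2}` with `‖b 0 − b 1‖ > 1` and
`‖b 0 + b 1‖ > 1`. -/
theorem exists_auerbach_basis_with_long_diagonals (X : Type*) [NormedAddCommGroup X]
    [NormedSpace ℝ X] [FiniteDimensional ℝ X] (hdim : Module.finrank ℝ X = 2) :
    ∃ (b : Module.Basis (Fin 2) ℝ X) (f : Fin 2 → (X →L[ℝ] ℝ)),
      (∀ i, ‖b i‖ = 1) ∧ (∀ i, ‖f i‖ = 1) ∧
      (∀ i j, f i (b j) = if i = j then 1 else 0) ∧
      1 < ‖b 0 - b 1‖ ∧ 1 < ‖b 0 + b 1‖ := by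
  classical
  have hnt : Nontrivial X := by
    apply Module.nontrivial_of_finrank_pos (R := ℝ)
    rw [hdim]; norm_num
  -- an auxiliary nonzero alternating bilinear form, kept opaque
  obtain ⟨Ω, hgc, hsym, e, e', hen, he'n, hpos⟩ :
      ∃ Ω : X →ₗ[ℝ] X →ₗ[ℝ] ℝ, Continuous (fun q : X × X => Ω q.1 q.2) ∧
        (∀ x y : X, Ω y x = -Ω x y) ∧
        ∃ e e' : X, ‖e‖ = 1 ∧ ‖e'‖ = 1 ∧ 0 < Ω e e' := by
    have b₀ : Module.Basis (Fin 2) ℝ X := Module.finBasisOfFinrankEq ℝ X hdim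
    set c0 : X →ₗ[ℝ] ℝ := b₀.coord 0 with hc0
    set c1 : X →ₗ[ℝ] ℝ := b₀.coord 1 with hc1
    set Ωl : X →ₗ[ℝ] X →ₗ[ℝ] ℝ := LinearMap.mk₂ ℝ (fun x y => c0 x * c1 y - c1 x * c0 y)
      (by intro m₁ m₂ n; simp only [map_add]; ring)
      (by intro c m n; simp only [map_smul, smul_eq_mul]; ring)
      (by intro m n₁ n₂; simp only [map_add]; ring)
      (by intro c m n; simp only [map_smul, smul_eq_mul]; ring) with hΩl
    have hap : ∀ x y : X, Ωl x y = c0 x * c1 y - c1 x * c0 y := fun _ _ => rfl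
    refine ⟨Ωl, ?_, ?_, ?_⟩
    · have hc0c : Continuous c0 := c0.continuous_of_finiteDimensional
      have hc1c : Continuous c1 := c1.continuous_of_finiteDimensional
      simp only [hap]
      exact ((hc0c.comp continuous_fst).mul (hc1c.comp continuous_snd)).sub
        ((hc1c.comp continuous_fst).mul (hc0c.comp continuous_snd))
    · intro x y
      rw [hap, hap]
      ring
    · have h0 : b₀ 0 ≠ 0 := b₀.ne_zero 0
      have h1 : b₀ 1 ≠ 0 := b₀.ne_zero 1
      have hn0 : (0:ℝ) < ‖b₀ 0‖ := norm_pos_iff.2 h0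
      have hn1 : (0:ℝ) < ‖b₀ 1‖ := norm_pos_iff.2 h1
      have e00 : c0 (b₀ 0) = 1 := by simp [hc0, Module.Basis.coord_apply, Module.Basis.repr_self]
      have e11 : c1 (b₀ 1) = 1 := by simp [hc1, Module.Basis.coord_apply, Module.Basis.repr_self]
      have e01 : c0 (b₀ 1) = 0 := by
        simp [hc0, Module.Basis.coord_apply, Module.Basis.repr_self, Finsupp.single_apply]
      have e10 : c1 (b₀ 0) = 0 := by
        simp [hc1, Module.Basis.coord_apply, Module.Basis.repr_self, Finsupp.single_apply]
      refine ⟨‖b₀ 0‖⁻¹ • b₀ 0, ‖b₀ 1‖⁻¹ • b₀ 1, ?_, ?_, ?_⟩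
      · rw [norm_smul, norm_inv, norm_norm, inv_mul_cancel₀ hn0.ne']
      · rw [norm_smul, norm_inv, norm_norm, inv_mul_cancel₀ hn1.ne']
      · rw [hap, map_smul, map_smul, map_smul, map_smul]
        simp only [smul_eq_mul, e00, e11, e01, e10]
        have : (0:ℝ) < ‖b₀ 0‖⁻¹ * ‖b₀ 1‖⁻¹ := by positivity
        nlinarith
  have hself : ∀ x : X, Ω x x = 0 := fun x => by have := hsym x x; linarith
  -- the sphere and its product
  set S : Set X := Metric.sphere (0:X) 1 with hS
  have hSc : IsCompact S := isCompact_sphere 0 1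
  have hSne : S.Nonempty := NormedSpace.sphere_nonempty.2 zero_le_one
  have hKc : IsCompact (S ×ˢ S) := hSc.prod hSc
  have hKne : (S ×ˢ S).Nonempty := hSne.prod hSne
  -- first maximization: the value M
  obtain ⟨p, hpK, hpmax⟩ := hKc.exists_isMaxOn hKne hgc.continuousOn
  set M : ℝ := Ω p.1 p.2 with hMdef
  have hmem_norm : ∀ x : X, x ∈ S ↔ ‖x‖ = 1 := by
    intro x; rw [hS, mem_sphere_zero_iff_norm]
  have hmax1 : ∀ z w : X, ‖z‖ = 1 → ‖w‖ = 1 → Ω z w ≤ M := by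
    intro z w hz hw
    exact hpmax (Set.mk_mem_prod ((hmem_norm z).2 hz) ((hmem_norm w).2 hw))
  -- M is positive
  have hM : 0 < M := lt_of_lt_of_le hpos (hmax1 e e' hen he'n)
  -- the key inequality
  have hKI : ∀ z w : X, |Ω z w| ≤ M * ‖z‖ * ‖w‖ := by
    intro z w
    rcases eq_or_ne z 0 with rfl | hz
    · simp
    rcases eq_or_ne w 0 with rfl | hw
    · simp
    have hnz : (0:ℝ) < ‖z‖ := norm_pos_iff.2 hz
    have hnw : (0:ℝ) < ‖w‖ := norm_pos_iff.2 hw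
    set z' : X := ‖z‖⁻¹ • z with hz'
    set w' : X := ‖w‖⁻¹ • w with hw'
    have hz'n : ‖z'‖ = 1 := by
      rw [hz', norm_smul, norm_inv, norm_norm, inv_mul_cancel₀ hnz.ne']
    have hw'n : ‖w'‖ = 1 := by
      rw [hw', norm_smul, norm_inv, norm_norm, inv_mul_cancel₀ hnw.ne']
    have hneg : ‖-z'‖ = 1 := by rw [norm_neg]; exact hz'n
    have habs : |Ω z' w'| ≤ M := by
      rw [abs_le]
      constructor
      · have := hmax1 (-z') w' hneg hw'n
        simp only [map_neg, LinearMap.neg_apply] at this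
        linarith
      · exact hmax1 z' w' hz'n hw'n
    have hexp : Ω z' w' = ‖z‖⁻¹ * ‖w‖⁻¹ * Ω z w := by
      rw [hz', hw', map_smul, map_smul]
      simp only [LinearMap.smul_apply, smul_eq_mul]
      ring
    rw [hexp, abs_mul, abs_mul, abs_inv, abs_inv, abs_norm, abs_norm] at habs
    have hmul := mul_le_mul_of_nonneg_left habs (le_of_lt (mul_pos hnz hnw))
    have hz1 : ‖z‖ * ‖z‖⁻¹ = 1 := mul_inv_cancel₀ hnz.ne'
    have hw1 : ‖w‖ * ‖w‖⁻¹ = 1 := mul_inv_cancel₀ hnw.ne'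
    have key2 : ‖z‖ * ‖w‖ * (‖z‖⁻¹ * ‖w‖⁻¹ * |Ω z w|) = |Ω z w| := by
      have h : ‖z‖ * ‖w‖ * (‖z‖⁻¹ * ‖w‖⁻¹ * |Ω z w|)
          = (‖z‖ * ‖z‖⁻¹) * ((‖w‖ * ‖w‖⁻¹) * |Ω z w|) := by ring
      rw [h, hz1, hw1, one_mul, one_mul]
    rw [key2] at hmul
    calc |Ω z w| ≤ ‖z‖ * ‖w‖ * M := hmul
      _ = M * ‖z‖ * ‖w‖ := by ring
  -- second maximization: the diagonal product over the set of maximizers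
  set A : Set (X × X) := (S ×ˢ S) ∩ ((fun q : X × X => Ω q.1 q.2) ⁻¹' {M}) with hA
  have hAc : IsCompact A := hKc.inter_right (isClosed_singleton.preimage hgc)
  have hpA : p ∈ A := ⟨hpK, rfl⟩
  have hPcont : Continuous fun q : X × X => ‖q.1 + q.2‖ * ‖q.1 - q.2‖ := by
    exact ((continuous_fst.add continuous_snd).norm).mul
      ((continuous_fst.sub continuous_snd).norm)
  obtain ⟨q, hqA, hqmax⟩ := hAc.exists_isMaxOn ⟨p, hpA⟩ hPcont.continuousOn
  set u : X := q.1 with hu_def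
  set v : X := q.2 with hv_def
  have hu : ‖u‖ = 1 := (hmem_norm u).1 hqA.1.1
  have hv : ‖v‖ = 1 := (hmem_norm v).1 hqA.1.2
  have huv : Ω u v = M := hqA.2
  have hmaxP : ∀ a c : X, ‖a‖ = 1 → ‖c‖ = 1 → Ω a c = M →
      ‖a + c‖ * ‖a - c‖ ≤ ‖u + v‖ * ‖u - v‖ := by
    intro a c ha hc hac
    exact hqmax ⟨Set.mk_mem_prod ((hmem_norm a).2 ha) ((hmem_norm c).2 hc), hac⟩
  -- the two strict diagonal inequalities
  have hd1 : 1 < ‖u - v‖ := aux_key Ω M hM hsym hKI u v hu hv huv hmaxP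
  have hd2 : 1 < ‖u + v‖ := by
    have hnu : ‖(-u : X)‖ = 1 := by rw [norm_neg]; exact hu
    have hvu' : Ω v (-u) = M := by
      rw [map_neg, hsym, huv]; ring
    have hmax' : ∀ a c : X, ‖a‖ = 1 → ‖c‖ = 1 → Ω a c = M →
        ‖a + c‖ * ‖a - c‖ ≤ ‖v + -u‖ * ‖v - -u‖ := by
      intro a c ha hc hac
      have h₁ : ‖v + -u‖ = ‖u - v‖ := by rw [← norm_neg]; congr 1; abel
      have h₂ : ‖v - -u‖ = ‖u + v‖ := by congr 1; abel
      rw [h₁, h₂, mul_comm (‖u - v‖) (‖u + v‖)]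
      exact hmaxP a c ha hc hac
    have := aux_key Ω M hM hsym hKI v (-u) hv hnu hvu' hmax'
    have h₂ : ‖v - -u‖ = ‖u + v‖ := by congr 1; abel
    rwa [h₂] at this
  -- linear independence and the basis
  have li : LinearIndependent ℝ ![u, v] := by
    rw [LinearIndependent.pair_iff]
    intro s t hst
    have h1 : Ω (s • u + t • v) v = s * M := by
      simp only [map_add, map_smul, LinearMap.add_apply, LinearMap.smul_apply,
        huv, hself, smul_eq_mul]
      ring
    have h2 : Ω u (s • u + t • v) = t * M := by
      simp only [map_add, map_smul, huv, hself, smul_eq_mul]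
      ring
    rw [hst] at h1 h2
    simp only [map_zero, LinearMap.zero_apply] at h1 h2
    constructor
    · have := h1.symm
      rcases mul_eq_zero.1 this with h | h
      · exact h
      · exact absurd h hM.ne'
    · have := h2.symm
      rcases mul_eq_zero.1 this with h | h
      · exact h
      · exact absurd h hM.ne'
  have hcard : Fintype.card (Fin 2) = Module.finrank ℝ X := by
    rw [hdim]; simp
  set b : Module.Basis (Fin 2) ℝ X := basisOfLinearIndependentOfCardEqFinrank li hcard with hbdef
  have hbcoe : ⇑b = ![u, v] := coe_basisOfLinearIndependentOfCardEqFinrank li hcard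
  have hb0 : b 0 = u := by rw [hbcoe]; rfl
  have hb1 : b 1 = v := by rw [hbcoe]; rfl
  -- the dual functionals
  set g0 : X →ₗ[ℝ] ℝ := M⁻¹ • (Ω.flip v) with hg0
  set g1 : X →ₗ[ℝ] ℝ := M⁻¹ • (Ω u) with hg1
  have hg0_apply : ∀ x : X, g0 x = M⁻¹ * Ω x v := by
    intro x; rw [hg0]; simp [LinearMap.flip_apply]
  have hg1_apply : ∀ x : X, g1 x = M⁻¹ * Ω u x := by
    intro x; rw [hg1]; simp
  set f : Fin 2 → (X →L[ℝ] ℝ) :=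
    ![LinearMap.toContinuousLinearMap g0, LinearMap.toContinuousLinearMap g1] with hfdef
  have hf0_apply : ∀ x : X, f 0 x = M⁻¹ * Ω x v := by
    intro x
    rw [hfdef]
    simp only [Matrix.cons_val_zero, LinearMap.coe_toContinuousLinearMap']
    exact hg0_apply x
  have hf1_apply : ∀ x : X, f 1 x = M⁻¹ * Ω u x := by
    intro x
    rw [hfdef]
    simp only [Matrix.cons_val_one, Matrix.head_cons, LinearMap.coe_toContinuousLinearMap']
    exact hg1_apply x
  -- norms of the functionals
  have hf0u : f 0 u = 1 := by rw [hf0_apply, huv, inv_mul_cancel₀ hM.ne']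
  have hf1v : f 1 v = 1 := by rw [hf1_apply, huv, inv_mul_cancel₀ hM.ne']
  have hf0norm : ‖f 0‖ = 1 := by
    apply le_antisymm
    · apply ContinuousLinearMap.opNorm_le_bound _ zero_le_one
      intro x
      rw [hf0_apply]
      have := hKI x v
      rw [hv, mul_one] at this
      rw [Real.norm_eq_abs, abs_mul, abs_inv, abs_of_pos hM]
      calc M⁻¹ * |Ω x v| ≤ M⁻¹ * (M * ‖x‖) :=
            mul_le_mul_of_nonneg_left this (by positivity)
        _ = ‖x‖ := by field_simp
        _ = 1 * ‖x‖ := by ring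
    · have := (f 0).le_opNorm u
      rw [hf0u, hu, mul_one] at this
      simpa using this
  have hf1norm : ‖f 1‖ = 1 := by
    apply le_antisymm
    · apply ContinuousLinearMap.opNorm_le_bound _ zero_le_one
      intro x
      rw [hf1_apply]
      have := hKI u x
      rw [hu] at this
      rw [Real.norm_eq_abs, abs_mul, abs_inv, abs_of_pos hM]
      calc M⁻¹ * |Ω u x| ≤ M⁻¹ * (M * 1 * ‖x‖) :=
            mul_le_mul_of_nonneg_left this (by positivity)
        _ = ‖x‖ := by field_simp
        _ = 1 * ‖x‖ := by ring
    · have := (f 1).le_opNorm v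
      rw [hf1v, hv, mul_one] at this
      simpa using this
  refine ⟨b, f, ?_, ?_, ?_, ?_, ?_⟩
  · intro i
    have hi : i = 0 ∨ i = 1 := by omega
    rcases hi with rfl | rfl
    · rw [hb0]; exact hu
    · rw [hb1]; exact hv
  · intro i
    have hi : i = 0 ∨ i = 1 := by omega
    rcases hi with rfl | rfl
    · exact hf0norm
    · exact hf1norm
  · intro i j
    have hi : i = 0 ∨ i = 1 := by omega
    have hj : j = 0 ∨ j = 1 := by omega
    rcases hi with rfl | rfl <;> rcases hj with rfl | rfl
    · rw [hb0, hf0u, if_pos rfl]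
    · rw [hb1, if_neg (by decide), hf0_apply, hself, mul_zero]
    · rw [hb0, if_neg (by decide), hf1_apply, hself, mul_zero]
    · rw [hb1, hf1v, if_pos rfl]
  · rw [hb0, hb1]; exact hd1
  · rw [hb0, hb1]; exact hd2

end
end
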